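/- Let f, g_1,…,g_m ∈ ℝ[X] have integer coefficients and degrees at most d, set g_0 := 1 and S := {x ∈ ℝⁿ : g_1(x) ≥ 0,…,g_m(x) ≥ 0}, and assume S is nonempty, compact, contained in [−1,1]ⁿ, has nonempty interior, and Q(S) is archimedean. Assume f(x) > 0 for all x ∈ S. Then there exist an even integer D = 2k and a positive integer N such that, with ε := 1/2^N, the polynomial f − ε·Σ_{α∈ℕⁿ, |α|≤k} X^{2α} belongs to the D-truncated quadratic module generated by g_1,…,g_m together with the polynomials 1 − X^{2α} for |α| ≤ k; that is, there exist sums of squares σ_0,…,σ_m and (σ_α)_{|α|≤k} in ℝ[X], with deg(σ_j g_j) ≤ D for all j and deg(σ_α·(1 − X^{2α})) ≤ D for all |α| ≤ k, such that f − ε·Σ_{|α|≤k} X^{2α} = Σ_{j=0}^m σ_j g_j + Σ_{|α|≤k} σ_α·(1 − X^{2α}). -/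

import Mathlib

open MvPolynomial

noncomputable section

/-- `f` is a sum of squares of polynomials. -/
def IsSOS {n : ℕ} (f : MvPolynomial (Fin n) ℝ) : Prop :=
  ∃ (r : ℕ) (s : Fin r → MvPolynomial (Fin n) ℝ), f = ∑ i, (s i) ^ 2

/-- Membership in the quadratic module generated by `g_1,…,g_m` (with `g_0 := 1`). -/
def InQM {n m : ℕ} (g : Fin m → MvPolynomial (Fin n) ℝ) (f : MvPolynomial (Fin n) ℝ) : Prop :=
  ∃ σ0 : MvPolynomial (Fin n) ℝ, ∃ σ : Fin m → MvPolynomial (Fin n) ℝ,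
    IsSOS σ0 ∧ (∀ j, IsSOS (σ j)) ∧ f = σ0 + ∑ j, σ j * g j

set_option linter.unusedSectionVars false
namespace PutinarProof

variable {n : ℕ}

abbrev Rg (n : ℕ) := MvPolynomial (Fin n) ℝ

/-- list-based sums of squares -/
def LSOS (p : Rg n) : Prop := ∃ l : List (Rg n), p = (l.map (fun q => q ^ 2)).sum

lemma LSOS.zero : LSOS (0 : Rg n) := ⟨[], rfl⟩

lemma LSOS.sq (p : Rg n) : LSOS (p ^ 2) := ⟨[p], by simp⟩

lemma LSOS.one : LSOS (1 : Rg n) := by simpa using LSOS.sq (1 : Rg n)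

lemma LSOS.add {p q : Rg n} (hp : LSOS p) (hq : LSOS q) : LSOS (p + q) := by
  obtain ⟨l1, rfl⟩ := hp; obtain ⟨l2, rfl⟩ := hq
  exact ⟨l1 ++ l2, by simp⟩

lemma LSOS.sq_mul (a : Rg n) {q : Rg n} (hq : LSOS q) : LSOS (a ^ 2 * q) := by
  obtain ⟨l, rfl⟩ := hq
  refine ⟨l.map (fun b => a * b), ?_⟩
  induction l with
  | nil => simp
  | cons b l ih => simp only [List.map_cons, List.sum_cons, mul_add, ih]; ring_nf

lemma LSOS.mul {p q : Rg n} (hp : LSOS p) (hq : LSOS q) : LSOS (p * q) := by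
  obtain ⟨l1, rfl⟩ := hp
  induction l1 with
  | nil => simpa using LSOS.zero
  | cons a l ih =>
      simp only [List.map_cons, List.sum_cons, add_mul]
      exact LSOS.add (LSOS.sq_mul a hq) ih

lemma LSOS.const {c : ℝ} (hc : 0 ≤ c) : LSOS (C c : Rg n) := by
  refine ⟨[C (Real.sqrt c)], ?_⟩
  simp [← map_pow, Real.sq_sqrt hc]

lemma LSOS.smul {c : ℝ} (hc : 0 ≤ c) {p : Rg n} (hp : LSOS p) : LSOS (C c * p) :=
  LSOS.mul (LSOS.const hc) hp

lemma LSOS.eval_nonneg {p : Rg n} (hp : LSOS p) (x : Fin n → ℝ) : 0 ≤ eval x p := by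
  obtain ⟨l, rfl⟩ := hp
  induction l with
  | nil => simp
  | cons a l ih =>
      simp only [List.map_cons, List.sum_cons, map_add, map_pow]
      exact add_nonneg (sq_nonneg _) ih


/-- A quadratic module (as a set of polynomials). -/
structure IsQM (Q : Set (Rg n)) : Prop where
  add_mem : ∀ {a b}, a ∈ Q → b ∈ Q → a + b ∈ Q
  sq_mul_mem : ∀ (p : Rg n) {a}, a ∈ Q → p ^ 2 * a ∈ Q
  sq_mem : ∀ p : Rg n, p ^ 2 ∈ Q

namespace IsQM

variable {Q : Set (Rg n)}

lemma zero_mem (hQ : IsQM Q) : (0 : Rg n) ∈ Q := by simpa using hQ.sq_mem 0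

lemma one_mem (hQ : IsQM Q) : (1 : Rg n) ∈ Q := by simpa using hQ.sq_mem 1

lemma sos_mul_mem (hQ : IsQM Q) {s a : Rg n} (hs : LSOS s) (ha : a ∈ Q) : s * a ∈ Q := by
  obtain ⟨l, rfl⟩ := hs
  induction l with
  | nil => simpa using hQ.zero_mem
  | cons b l ih =>
      simp only [List.map_cons, List.sum_cons, add_mul]
      exact hQ.add_mem (hQ.sq_mul_mem b ha) ih

lemma sos_mem (hQ : IsQM Q) {s : Rg n} (hs : LSOS s) : s ∈ Q := by
  simpa using hQ.sos_mul_mem hs hQ.one_mem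

lemma const_mem (hQ : IsQM Q) {c : ℝ} (hc : 0 ≤ c) : (C c : Rg n) ∈ Q := hQ.sos_mem (LSOS.const hc)

lemma smul_mem (hQ : IsQM Q) {c : ℝ} (hc : 0 ≤ c) {a : Rg n} (ha : a ∈ Q) : C c * a ∈ Q := by
  have : (C (Real.sqrt c) : Rg n) ^ 2 * a ∈ Q := hQ.sq_mul_mem _ ha
  rwa [← map_pow, Real.sq_sqrt hc] at this

/-- scalar lemma : if `k ± a ∈ Q` with `k > 0` then `k² - a² ∈ Q`. -/
lemma sq_diff_mem (hQ : IsQM Q) {k : ℝ} (hk : 0 < k) {a : Rg n}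
    (h1 : C k - a ∈ Q) (h2 : C k + a ∈ Q) : C (k ^ 2) - a ^ 2 ∈ Q := by
  have key : C (k ^ 2) - a ^ 2 =
      C (1 / (2 * k)) * ((C k - a) ^ 2 * (C k + a) + (C k + a) ^ 2 * (C k - a)) := by
    have h2k : (C (1 / (2 * k)) : Rg n) * C (2 * k) = 1 := by
      rw [← map_mul]
      rw [one_div, inv_mul_cancel₀ (by positivity)]
      exact map_one C
    have expand : (C k - a) ^ 2 * (C k + a) + (C k + a) ^ 2 * (C k - a)
        = C (2 * k) * (C (k ^ 2) - a ^ 2) := by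
      have : (C (2 * k) : Rg n) = 2 * C k := by
        rw [map_mul, map_ofNat]
      rw [this]
      have : (C (k ^ 2) : Rg n) = C k ^ 2 := by rw [map_pow]
      rw [this]; ring
    rw [expand, ← mul_assoc, h2k, one_mul]
  rw [key]
  exact hQ.smul_mem (by positivity)
    (hQ.add_mem (hQ.sq_mul_mem _ h2) (hQ.sq_mul_mem _ h1))

/-- interval product: if `a ∈ Q` and `κ - a ∈ Q` with `κ > 0`, then `a * (κ - a) ∈ Q`. -/
lemma mul_diff_mem (hQ : IsQM Q) {κ : ℝ} (hκ : 0 < κ) {a : Rg n}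
    (ha : a ∈ Q) (ha' : C κ - a ∈ Q) : a * (C κ - a) ∈ Q := by
  have hb1 : C κ - (2 * a - C κ) ∈ Q := by
    have : C κ - (2 * a - C κ) = (C κ - a) + (C κ - a) := by ring
    rw [this]; exact hQ.add_mem ha' ha'
  have hb2 : C κ + (2 * a - C κ) ∈ Q := by
    have : C κ + (2 * a - C κ) = a + a := by ring
    rw [this]; exact hQ.add_mem ha ha
  have := hQ.sq_diff_mem hκ hb1 hb2
  have key : a * (C κ - a) = C (1/4) * (C (κ ^ 2) - (2 * a - C κ) ^ 2) := by
    have h4 : (C (1/4) : Rg n) * C 4 = 1 := by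
      rw [← map_mul]; norm_num
    have expand : (C (κ ^ 2) : Rg n) - (2 * a - C κ) ^ 2 = C 4 * (a * (C κ - a)) := by
      have : (C (κ ^ 2) : Rg n) = C κ ^ 2 := by rw [map_pow]
      rw [this]
      rw [map_ofNat C 4]; ring
    rw [expand, ← mul_assoc, h4, one_mul]
  rw [key]
  exact hQ.smul_mem (by norm_num) this

end IsQM


variable {m : ℕ}

/-- the quadratic module generated by `g`. -/
def QMset (g : Fin m → Rg n) : Set (Rg n) :=
  {p | ∃ σ0 : Rg n, ∃ σ : Fin m → Rg n, LSOS σ0 ∧ (∀ j, LSOS (σ j)) ∧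
    p = σ0 + ∑ j, σ j * g j}

lemma QMset.isQM (g : Fin m → Rg n) : IsQM (QMset g) := by
  constructor
  · rintro a b ⟨s0, s, hs0, hs, rfl⟩ ⟨t0, t, ht0, ht, rfl⟩
    exact ⟨s0 + t0, fun j => s j + t j, hs0.add ht0, fun j => (hs j).add (ht j), by
      rw [Finset.sum_congr rfl (fun j _ => add_mul (s j) (t j) (g j)), Finset.sum_add_distrib]
      ring⟩
  · rintro p a ⟨s0, s, hs0, hs, rfl⟩
    exact ⟨p ^ 2 * s0, fun j => p ^ 2 * s j, (LSOS.sq p).mul hs0,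
      fun j => (LSOS.sq p).mul (hs j), by rw [mul_add, Finset.mul_sum]; ring_nf⟩
  · intro p
    exact ⟨p ^ 2, fun _ => 0, LSOS.sq p, fun _ => LSOS.zero, by simp⟩

lemma QMset.sos_mem' {g : Fin m → Rg n} {s : Rg n} (hs : LSOS s) : s ∈ QMset g :=
  (QMset.isQM g).sos_mem hs

lemma QMset.gen_mem (g : Fin m → Rg n) (j : Fin m) : g j ∈ QMset g := by
  refine ⟨0, fun j' => if j' = j then 1 else 0, LSOS.zero, ?_, ?_⟩
  · intro j'; by_cases h : j' = j <;> simp [h, LSOS.one, LSOS.zero]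
  · rw [Finset.sum_eq_single j (fun b _ hb => by simp [hb]) (by simp)]
    simp

lemma QMset.eval_nonneg {g : Fin m → Rg n} {p : Rg n} (hp : p ∈ QMset g)
    {x : Fin n → ℝ} (hx : ∀ j, 0 ≤ eval x (g j)) : 0 ≤ eval x p := by
  obtain ⟨s0, s, hs0, hs, rfl⟩ := hp
  rw [map_add, map_sum]
  refine add_nonneg (hs0.eval_nonneg x) (Finset.sum_nonneg fun j _ => ?_)
  rw [map_mul]
  exact mul_nonneg ((hs j).eval_nonneg x) (hx j)

/-- boundedness with respect to the module. -/
def Bdd (g : Fin m → Rg n) (p : Rg n) : Prop :=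
  ∃ k : ℝ, 0 ≤ k ∧ C k - p ∈ QMset g ∧ C k + p ∈ QMset g

namespace Bdd

variable {g : Fin m → Rg n}

lemma const (a : ℝ) : Bdd g (C a) := by
  refine ⟨|a|, abs_nonneg a, ?_, ?_⟩
  · rw [← map_sub]; exact (QMset.isQM g).const_mem (by simp [sub_nonneg, neg_abs_le, abs_nonneg, neg_le_abs, le_abs_self])
  · rw [← map_add]
    refine (QMset.isQM g).const_mem ?_
    have := neg_abs_le a; linarith

lemma add {p q : Rg n} (hp : Bdd g p) (hq : Bdd g q) : Bdd g (p + q) := by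
  obtain ⟨k, hk, h1, h2⟩ := hp; obtain ⟨l, hl, h3, h4⟩ := hq
  refine ⟨k + l, by linarith, ?_, ?_⟩
  · have : C (k + l) - (p + q) = (C k - p) + (C l - q) := by rw [map_add]; ring
    rw [this]; exact (QMset.isQM g).add_mem h1 h3
  · have : C (k + l) + (p + q) = (C k + p) + (C l + q) := by rw [map_add]; ring
    rw [this]; exact (QMset.isQM g).add_mem h2 h4

lemma neg {p : Rg n} (hp : Bdd g p) : Bdd g (-p) := by
  obtain ⟨k, hk, h1, h2⟩ := hp
  exact ⟨k, hk, by simpa [sub_neg_eq_add] using h2, by simpa [sub_eq_add_neg] using h1⟩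

lemma sq {p : Rg n} (hp : Bdd g p) : Bdd g (p ^ 2) := by
  obtain ⟨k, hk, h1, h2⟩ := hp
  have hk1 : (0:ℝ) < k + 1 := by linarith
  have h1' : C (k+1) - p ∈ QMset g := by
    have : C (k+1) - p = (C k - p) + C 1 := by rw [map_add]; ring
    rw [this]; exact (QMset.isQM g).add_mem h1 ((QMset.isQM g).const_mem zero_le_one)
  have h2' : C (k+1) + p ∈ QMset g := by
    have : C (k+1) + p = (C k + p) + C 1 := by rw [map_add]; ring
    rw [this]; exact (QMset.isQM g).add_mem h2 ((QMset.isQM g).const_mem zero_le_one)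
  refine ⟨(k+1)^2, by positivity, (QMset.isQM g).sq_diff_mem hk1 h1' h2', ?_⟩
  exact (QMset.isQM g).add_mem ((QMset.isQM g).const_mem (by positivity)) ((QMset.isQM g).sq_mem p)

lemma smul (r : ℝ) {p : Rg n} (hp : Bdd g p) : Bdd g (C r * p) := by
  obtain ⟨k, hk, h1, h2⟩ := hp
  rcases le_or_gt 0 r with hr | hr
  · refine ⟨r * k, mul_nonneg hr hk, ?_, ?_⟩
    · have : C (r * k) - C r * p = C r * (C k - p) := by rw [map_mul]; ring
      rw [this]; exact (QMset.isQM g).smul_mem hr h1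
    · have : C (r * k) + C r * p = C r * (C k + p) := by rw [map_mul]; ring
      rw [this]; exact (QMset.isQM g).smul_mem hr h2
  · refine ⟨(-r) * k, mul_nonneg (by linarith) hk, ?_, ?_⟩
    · have : C ((-r) * k) - C r * p = C (-r) * (C k + p) := by
        rw [map_mul, map_neg]; ring
      rw [this]; exact (QMset.isQM g).smul_mem (by linarith) h2
    · have : C ((-r) * k) + C r * p = C (-r) * (C k - p) := by
        rw [map_mul, map_neg]; ring
      rw [this]; exact (QMset.isQM g).smul_mem (by linarith) h1

lemma mul {p q : Rg n} (hp : Bdd g p) (hq : Bdd g q) : Bdd g (p * q) := by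
  have h4 : (C (1/4 : ℝ) : Rg n) * 4 = 1 := by
    rw [show ((4:Rg n)) = C (4:ℝ) from (map_ofNat C 4).symm, ← map_mul]; norm_num
  have key : p * q = C (1/4) * ((p + q)^2) + C (-(1/4)) * ((p - q)^2) := by
    rw [map_neg]
    linear_combination (-(p * q)) * h4
  rw [key]
  have h1 : Bdd g ((p+q)^2) := (hp.add hq).sq
  have h2 : Bdd g ((p-q)^2) := by
    have : p - q = p + (-q) := by ring
    rw [this]; exact (hp.add hq.neg).sq
  exact (Bdd.smul _ h1).add (Bdd.smul _ h2)

end Bdd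

/-- archimedean: every polynomial is bounded. -/
lemma arch_all (g : Fin m → Rg n) (harch : ∃ N : ℕ, (C (N:ℝ) : Rg n) - ∑ i, (X i)^2 ∈ QMset g)
    (p : Rg n) : Bdd g p := by
  obtain ⟨N, hN⟩ := harch
  have hQ := QMset.isQM g
  -- each X i is bounded
  have hXsq : ∀ i : Fin n, C ((N:ℝ)) - (X i)^2 ∈ QMset g := by
    intro i
    have hsum : (C ((N:ℝ)) : Rg n) - (X i)^2
        = (C ((N:ℝ)) - ∑ k, (X k)^2) + ∑ k ∈ Finset.univ.erase i, (X k)^2 := by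
      rw [Finset.sum_erase_eq_sub (Finset.mem_univ i)]
      ring
    rw [hsum]
    refine hQ.add_mem hN (hQ.sos_mem ?_)
    -- finset sum of squares is LSOS
    classical
    induction (Finset.univ.erase i) using Finset.induction_on with
    | empty => simpa using LSOS.zero
    | insert _ _ hx ih => rw [Finset.sum_insert hx]; exact (LSOS.sq _).add ih
  have hX : ∀ i : Fin n, Bdd g (X i) := by
    intro i
    have hplus : C ((N:ℝ)+1) + 2 * X i ∈ QMset g := by
      have : C ((N:ℝ)+1) + 2 * X i = (C ((N:ℝ)) - (X i)^2) + (X i + 1)^2 := by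
        rw [map_add, map_one]; ring
      rw [this]; exact hQ.add_mem (hXsq i) (hQ.sq_mem _)
    have hminus : C ((N:ℝ)+1) - 2 * X i ∈ QMset g := by
      have : C ((N:ℝ)+1) - 2 * X i = (C ((N:ℝ)) - (X i)^2) + (X i - 1)^2 := by
        rw [map_add, map_one]; ring
      rw [this]; exact hQ.add_mem (hXsq i) (hQ.sq_mem _)
    refine ⟨((N:ℝ)+1)/2, by positivity, ?_⟩
    have h2 : (C (1/2 : ℝ) : Rg n) * 2 = 1 := by
      rw [show ((2:Rg n)) = C (2:ℝ) from (map_ofNat C 2).symm, ← map_mul]; norm_num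
    constructor
    · have : C (((N:ℝ)+1)/2) - X i = C (1/2) * (C ((N:ℝ)+1) - 2 * X i) := by
        rw [show ((N:ℝ)+1)/2 = 1/2 * ((N:ℝ)+1) by ring, map_mul]
        linear_combination (X i) * h2
      rw [this]; exact hQ.smul_mem (by norm_num) hminus
    · have : C (((N:ℝ)+1)/2) + X i = C (1/2) * (C ((N:ℝ)+1) + 2 * X i) := by
        rw [show ((N:ℝ)+1)/2 = 1/2 * ((N:ℝ)+1) by ring, map_mul]
        linear_combination (-(X i)) * h2
      rw [this]; exact hQ.smul_mem (by norm_num) hplus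
  -- induction over the polynomial
  induction p using MvPolynomial.induction_on with
  | C a => exact Bdd.const a
  | add p q hp hq => exact hp.add hq
  | mul_X p i hp => exact hp.mul (hX i)


section Character

variable {m : ℕ} {g : Fin m → Rg n} {Q : Set (Rg n)}

/-- the "lower set" of an element -/
def LSet (Q : Set (Rg n)) (x : Rg n) : Set ℝ := {r | x - C r ∈ Q}

variable (hQM : IsQM Q) (hMQ : QMset g ⊆ Q) (hproper : (-1 : Rg n) ∉ Q)
  (harch : ∀ p : Rg n, Bdd g p)

namespace Char

include hQM hproper

lemma neg_const_not_mem {c : ℝ} (hc : c < 0) : (C c : Rg n) ∉ Q := by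
  intro hmem
  have h1 : (C (1/(-c)) : Rg n) * C c ∈ Q := hQM.smul_mem (one_div_nonneg.mpr (by linarith)) hmem
  rw [← map_mul] at h1
  have : (1/(-c)) * c = -1 := by
    field_simp
    simp [div_neg, div_self hc.ne]
  rw [this] at h1
  have : (C (-1 : ℝ) : Rg n) = -1 := by rw [map_neg, map_one]
  rw [this] at h1
  exact hproper h1

omit hQM hproper in
include hMQ harch in
lemma LSet_nonempty (x : Rg n) : (LSet Q x).Nonempty := by
  obtain ⟨k, hk, h1, h2⟩ := harch x
  refine ⟨-k, ?_⟩
  show x - C (-k) ∈ Q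
  rw [map_neg, sub_neg_eq_add, add_comm]
  exact hMQ h2

include hMQ harch in
lemma LSet_bddAbove (x : Rg n) : BddAbove (LSet Q x) := by
  obtain ⟨k, hk, h1, h2⟩ := harch x
  refine ⟨k, fun r hr => ?_⟩
  by_contra hlt
  push_neg at hlt
  have : (C (k - r) : Rg n) ∈ Q := by
    rw [map_sub]
    have : (C k : Rg n) - C r = (C k - x) + (x - C r) := by ring
    rw [this]
    exact hQM.add_mem (hMQ h1) hr
  exact neg_const_not_mem hQM hproper (by linarith) this

/-- the character function -/
noncomputable def phi (Q : Set (Rg n)) (x : Rg n) : ℝ := sSup (LSet Q x)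

include hMQ harch in
lemma le_phi {x : Rg n} {r : ℝ} (hr : x - C r ∈ Q) : r ≤ phi Q x :=
  le_csSup (LSet_bddAbove hQM hMQ hproper harch x) hr

include hMQ harch in
lemma mem_of_lt_phi {x : Rg n} {r : ℝ} (hr : r < phi Q x) : x - C r ∈ Q := by
  obtain ⟨l, hl, hrl⟩ := exists_lt_of_lt_csSup (LSet_nonempty hMQ harch x) hr
  have : x - C r = (x - C l) + C (l - r) := by rw [map_sub]; ring
  rw [this]
  exact hQM.add_mem hl (hQM.const_mem (by linarith))

include hMQ harch in
lemma phi_nonneg_of_mem {x : Rg n} (hx : x ∈ Q) : 0 ≤ phi Q x :=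
  le_phi hQM hMQ hproper harch (by simpa using hx)

variable (hmaxtot : ∀ b : Rg n, b ∈ Q ∨ -b ∈ Q)

include hMQ harch in
lemma phi_add_aux (x y : Rg n) : phi Q x + phi Q y ≤ phi Q (x + y) := by
  have hx := LSet_nonempty hMQ harch x
  have hy := LSet_nonempty hMQ harch y
  have key : ∀ r ∈ LSet Q x, ∀ s ∈ LSet Q y, r + s ≤ phi Q (x + y) := by
    intro r hr s hs
    refine le_phi hQM hMQ hproper harch ?_
    have : x + y - C (r + s) = (x - C r) + (y - C s) := by rw [map_add]; ring
    rw [this]; exact hQM.add_mem hr hs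
  refine add_le_of_le_sub_right (csSup_le hx fun r hr => ?_)
  refine le_sub_comm.mpr (csSup_le hy fun s hs => ?_)
  have := key r hr s hs; linarith

include hMQ harch in
lemma phi_neg_add (x : Rg n) : phi Q x + phi Q (-x) ≤ 0 := by
  have hx := LSet_nonempty hMQ harch x
  have hy := LSet_nonempty hMQ harch (-x)
  have key : ∀ r ∈ LSet Q x, ∀ s ∈ LSet Q (-x), r + s ≤ 0 := by
    intro r hr s hs
    by_contra hlt
    push_neg at hlt
    have : (C (-(r + s)) : Rg n) ∈ Q := by
      have : (C (-(r + s)) : Rg n) = (x - C r) + (-x - C s) := by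
        rw [map_neg, map_add]; ring
      rw [this]; exact hQM.add_mem hr hs
    exact neg_const_not_mem hQM hproper (by linarith) this
  refine add_le_of_le_sub_right (csSup_le hx fun r hr => ?_)
  refine le_sub_comm.mpr (csSup_le hy fun s hs => ?_)
  have := key r hr s hs; linarith

include hMQ harch hmaxtot in
lemma phi_neg (x : Rg n) : phi Q (-x) = -phi Q x := by
  have h1 := phi_neg_add hQM hMQ hproper harch x
  -- lower bound uses totality
  have h2 : 0 ≤ phi Q x + phi Q (-x) := by
    by_contra hlt
    push_neg at hlt
    have hlt' : phi Q x < -phi Q (-x) := by linarith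
    obtain ⟨r, hr1, hr2⟩ := exists_between hlt'
    rcases hmaxtot (x - C r) with hb | hb
    · exact absurd (le_phi hQM hMQ hproper harch hb) (not_le.mpr hr1)
    · have : -x - C (-r) ∈ Q := by
        have : -x - C (-r) = -(x - C r) := by rw [map_neg]; ring
        rw [this]; exact hb
      have := le_phi hQM hMQ hproper harch this
      linarith
  linarith

include hMQ harch hmaxtot in
lemma phi_add (x y : Rg n) : phi Q (x + y) = phi Q x + phi Q y := by
  refine le_antisymm ?_ (phi_add_aux hQM hMQ hproper harch x y)
  have h1 := phi_add_aux hQM hMQ hproper harch (-x) (-y)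
  have h2 := phi_neg hQM hMQ hproper harch hmaxtot x
  have h3 := phi_neg hQM hMQ hproper harch hmaxtot y
  have h4 := phi_neg hQM hMQ hproper harch hmaxtot (x + y)
  have : -x + -y = -(x+y) := by ring
  rw [this, h4, h2, h3] at h1
  linarith

omit hMQ harch in
lemma phi_C (a : ℝ) : phi Q (C a) = a := by
  have : LSet Q (C a) = Set.Iic a := by
    ext r
    simp only [LSet, Set.mem_setOf_eq, Set.mem_Iic]
    constructor
    · intro h
      by_contra hlt
      push_neg at hlt
      rw [← map_sub] at h
      exact neg_const_not_mem hQM hproper (by linarith) h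
    · intro h
      rw [← map_sub]
      exact hQM.const_mem (by linarith)
  rw [phi, this, csSup_Iic]

include hMQ harch in
lemma phi_const_mul {r : ℝ} (hr : 0 < r) (x : Rg n) : phi Q (C r * x) = r * phi Q x := by
  refine le_antisymm ?_ ?_
  · refine csSup_le (LSet_nonempty hMQ harch _) fun s hs => ?_
    have hmem : x - C (s / r) ∈ Q := by
      have e1 : (C (1/r) : Rg n) * C r = 1 := by
        rw [← map_mul, one_div, inv_mul_cancel₀ hr.ne', map_one]
      have heq : x - C (s / r) = C (1/r) * (C r * x - C s) := by
        rw [show s/r = 1/r * s by ring, map_mul]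
        linear_combination (-x) * e1
      rw [heq]
      exact hQM.smul_mem (one_div_nonneg.mpr hr.le) hs
    have := le_phi hQM hMQ hproper harch hmem
    rw [div_le_iff₀ hr] at this
    linarith [this]
  · rw [mul_comm, ← le_div_iff₀ hr]
    refine csSup_le (LSet_nonempty hMQ harch _) fun s hs => ?_
    rw [le_div_iff₀ hr, mul_comm]
    refine le_phi hQM hMQ hproper harch ?_
    have heq : C r * x - C (r * s) = C r * (x - C s) := by
      rw [map_mul]; ring
    rw [heq]
    exact hQM.smul_mem hr.le hs

include hMQ harch hmaxtot in
lemma phi_smul (r : ℝ) (x : Rg n) : phi Q (C r * x) = r * phi Q x := by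
  rcases lt_trichotomy r 0 with hr | hr | hr
  · have : C r * x = -(C (-r) * x) := by rw [map_neg]; ring
    rw [this, phi_neg hQM hMQ hproper harch hmaxtot,
      phi_const_mul hQM hMQ hproper harch (by linarith : (0:ℝ) < -r)]
    ring
  · subst hr; simp only [map_zero, zero_mul]
    simpa using phi_C hQM hproper 0
  · exact phi_const_mul hQM hMQ hproper harch hr x

include hMQ harch hmaxtot in
lemma phi_sub (x y : Rg n) : phi Q (x - y) = phi Q x - phi Q y := by
  rw [sub_eq_add_neg, phi_add hQM hMQ hproper harch hmaxtot,
    phi_neg hQM hMQ hproper harch hmaxtot]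
  ring

include hMQ harch hmaxtot in
lemma phi_sq (x : Rg n) : phi Q (x ^ 2) = (phi Q x) ^ 2 := by
  set a := phi Q x with ha
  set c : Rg n := x - C a with hc
  have hphic : phi Q c = 0 := by
    rw [hc, phi_sub hQM hMQ hproper harch hmaxtot, phi_C hQM hproper]
    ring
  have hphinegc : phi Q (-c) = 0 := by
    rw [phi_neg hQM hMQ hproper harch hmaxtot, hphic, neg_zero]
  have hcsq_nonneg : 0 ≤ phi Q (c ^ 2) :=
    phi_nonneg_of_mem hQM hMQ hproper harch (hQM.sq_mem c)
  have hcsq_le : ∀ ε : ℝ, 0 < ε → phi Q (c ^ 2) ≤ ε ^ 2 := by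
    intro ε hε
    have h1 : c - C (-ε) ∈ Q := mem_of_lt_phi hQM hMQ hproper harch (by rw [hphic]; linarith)
    have h2 : -c - C (-ε) ∈ Q := mem_of_lt_phi hQM hMQ hproper harch (by rw [hphinegc]; linarith)
    have h1' : C ε + c ∈ Q := by
      have : C ε + c = c - C (-ε) := by rw [map_neg]; ring
      rw [this]; exact h1
    have h2' : C ε - c ∈ Q := by
      have : C ε - c = -c - C (-ε) := by rw [map_neg]; ring
      rw [this]; exact h2
    have hsq := hQM.sq_diff_mem hε h2' h1'
    have := phi_nonneg_of_mem hQM hMQ hproper harch hsq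
    rw [phi_sub hQM hMQ hproper harch hmaxtot, phi_C hQM hproper] at this
    linarith
  have hcsq : phi Q (c ^ 2) = 0 := by
    by_contra hne
    have hpos : 0 < phi Q (c ^ 2) := lt_of_le_of_ne hcsq_nonneg (Ne.symm hne)
    have := hcsq_le (Real.sqrt (phi Q (c ^ 2) / 2)) (Real.sqrt_pos.mpr (by linarith))
    rw [Real.sq_sqrt (by linarith)] at this
    linarith
  have hxid : x ^ 2 = c ^ 2 + C (2 * a) * c + C (a ^ 2) := by
    rw [hc]
    rw [show (C (2*a) : Rg n) = 2 * C a by rw [map_mul, map_ofNat]]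
    rw [show (C (a^2) : Rg n) = (C a)^2 by rw [map_pow]]
    ring
  rw [hxid, phi_add hQM hMQ hproper harch hmaxtot, phi_add hQM hMQ hproper harch hmaxtot,
    phi_smul hQM hMQ hproper harch hmaxtot, phi_C hQM hproper, hcsq, hphic]
  ring

include hMQ harch hmaxtot in
lemma phi_mul (x y : Rg n) : phi Q (x * y) = phi Q x * phi Q y := by
  have h4 : (C (1/4 : ℝ) : Rg n) * 4 = 1 := by
    rw [show ((4:Rg n)) = C (4:ℝ) from (map_ofNat C 4).symm, ← map_mul]; norm_num
  have key : x * y = C (1/4) * ((x + y)^2 - (x - y)^2) := by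
    linear_combination (-(x * y)) * h4
  rw [key, phi_smul hQM hMQ hproper harch hmaxtot,
    phi_sub hQM hMQ hproper harch hmaxtot,
    phi_sq hQM hMQ hproper harch hmaxtot, phi_sq hQM hMQ hproper harch hmaxtot,
    phi_add hQM hMQ hproper harch hmaxtot,
    phi_sub hQM hMQ hproper harch hmaxtot]
  ring

include hMQ harch hmaxtot in
lemma phi_eval (p : Rg n) : phi Q p = eval (fun i => phi Q (X i)) p := by
  induction p using MvPolynomial.induction_on with
  | C a => rw [phi_C hQM hproper]; simp
  | add p q hp hq =>
      rw [phi_add hQM hMQ hproper harch hmaxtot, map_add, hp, hq]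
  | mul_X p i hp =>
      rw [phi_mul hQM hMQ hproper harch hmaxtot, map_mul, hp]
      simp

end Char

/-- From a proper quadratic module over `QMset g`, get a point where everything is nonneg. -/
lemma exists_point {g : Fin m → Rg n} (harch : ∀ p : Rg n, Bdd g p)
    {Q₀ : Set (Rg n)} (hQ₀ : IsQM Q₀) (hM : QMset g ⊆ Q₀) (hproper : (-1 : Rg n) ∉ Q₀) :
    ∃ x : Fin n → ℝ, ∀ p ∈ Q₀, 0 ≤ eval x p := by
  classical
  set F : Set (Set (Rg n)) := {Q | IsQM Q ∧ Q₀ ⊆ Q ∧ (-1 : Rg n) ∉ Q} with hF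
  have hQ₀F : Q₀ ∈ F := ⟨hQ₀, subset_rfl, hproper⟩
  have hub : ∀ c ⊆ F, IsChain (· ⊆ ·) c → c.Nonempty → ∃ ub ∈ F, ∀ s ∈ c, s ⊆ ub := by
    intro c hcF hchain hcne
    refine ⟨⋃₀ c, ⟨?_, ?_, ?_⟩, fun s hs => Set.subset_sUnion_of_mem hs⟩
    · constructor
      · rintro a b ⟨Qa, hQa, ha⟩ ⟨Qb, hQb, hb⟩
        rcases hchain.total hQa hQb with h | h
        · exact ⟨Qb, hQb, (hcF hQb).1.add_mem (h ha) hb⟩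
        · exact ⟨Qa, hQa, (hcF hQa).1.add_mem ha (h hb)⟩
      · rintro p a ⟨Qa, hQa, ha⟩
        exact ⟨Qa, hQa, (hcF hQa).1.sq_mul_mem p ha⟩
      · intro p
        obtain ⟨Qa, hQa⟩ := hcne
        exact ⟨Qa, hQa, (hcF hQa).1.sq_mem p⟩
    · obtain ⟨Qa, hQa⟩ := hcne
      exact (hcF hQa).2.1.trans (Set.subset_sUnion_of_mem hQa)
    · rintro ⟨Qa, hQa, ha⟩
      exact (hcF hQa).2.2 ha
  obtain ⟨Q, hQ₀Q, h2⟩ := zorn_subset_nonempty F hub Q₀ hQ₀F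
  have hQF : Q ∈ F := h2.1
  have hQmax : ∀ a ∈ F, Q ⊆ a → a ⊆ Q := fun a ha hQa => h2.2 ha hQa
  obtain ⟨hQM, hQ₀sub, hQproper⟩ := hQF
  have hMQ : QMset g ⊆ Q := hM.trans hQ₀sub
  -- totality of maximal Q
  have hmaxtot : ∀ b : Rg n, b ∈ Q ∨ -b ∈ Q := by
    intro b
    by_contra hcon
    push_neg at hcon
    obtain ⟨hb, hnb⟩ := hcon
    -- extension helper
    have hext : ∀ b' : Rg n, b' ∉ Q → ∃ q ∈ Q, ∃ s, LSOS s ∧ (-1 : Rg n) = q + s * b' := by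
      intro b' hb'
      set Q' : Set (Rg n) := {y | ∃ q ∈ Q, ∃ s, LSOS s ∧ y = q + s * b'} with hQ'
      have hQ'QM : IsQM Q' := by
        constructor
        · rintro a1 a2 ⟨q1, hq1, s1, hs1, rfl⟩ ⟨q2, hq2, s2, hs2, rfl⟩
          exact ⟨q1 + q2, hQM.add_mem hq1 hq2, s1 + s2, hs1.add hs2, by ring⟩
        · rintro p a ⟨q1, hq1, s1, hs1, rfl⟩
          exact ⟨p^2 * q1, hQM.sq_mul_mem p hq1, p^2 * s1, (LSOS.sq p).mul hs1, by ring⟩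
        · intro p
          exact ⟨p^2, hQM.sq_mem p, 0, LSOS.zero, by ring⟩
      have hQsubQ' : Q ⊆ Q' := fun y hy => ⟨y, hy, 0, LSOS.zero, by ring⟩
      have hb'Q' : b' ∈ Q' := ⟨0, hQM.zero_mem, 1, LSOS.one, by ring⟩
      have hQ'notF : Q' ∉ F := by
        intro hQ'F
        exact hb' (hQmax Q' hQ'F (hQsubQ'.trans (le_refl _)) hb'Q')
      have : (-1 : Rg n) ∈ Q' := by
        by_contra hno
        exact hQ'notF ⟨hQ'QM, hQ₀sub.trans hQsubQ', hno⟩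
      obtain ⟨q, hq, s, hs, heq⟩ := this
      exact ⟨q, hq, s, hs, heq⟩
    obtain ⟨q1, hq1, s1, hs1, he1⟩ := hext b hb
    obtain ⟨q2, hq2, s2, hs2, he2⟩ := hext (-b) hnb
    -- derive -(s1 + s2) ∈ Q
    have hsum : s2 * q1 + s1 * q2 = -(s1 + s2) := by
      linear_combination (-s2) * he1 + (-s1) * he2
    have hsumQ : -(s1 + s2) ∈ Q := by
      rw [← hsum]
      exact hQM.add_mem (hQM.sos_mul_mem hs2 hq1) (hQM.sos_mul_mem hs1 hq2)
    have hs1Q : s1 ∈ Q := hQM.sos_mem hs1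
    have hs2Q : s2 ∈ Q := hQM.sos_mem hs2
    have hnegs1 : -s1 ∈ Q := by
      have : -s1 = s2 + -(s1 + s2) := by ring
      rw [this]; exact hQM.add_mem hs2Q hsumQ
    -- s1 * b ∈ Q via the ideal trick
    have h4 : (C (1/4 : ℝ) : Rg n) * 4 = 1 := by
      rw [show ((4:Rg n)) = C (4:ℝ) from (map_ofNat C 4).symm, ← map_mul]; norm_num
    have hs1b : s1 * b ∈ Q := by
      have key : s1 * b = C (1/4) * ((b+1)^2 * s1 + (b-1)^2 * (-s1)) := by
        linear_combination (-(s1 * b)) * h4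
      rw [key]
      exact hQM.smul_mem (by norm_num)
        (hQM.add_mem (hQM.sq_mul_mem _ hs1Q) (hQM.sq_mul_mem _ hnegs1))
    have : (-1 : Rg n) ∈ Q := by
      rw [he1]
      exact hQM.add_mem hq1 hs1b
    exact hQproper this
  refine ⟨fun i => Char.phi Q (X i), fun p hp => ?_⟩
  have := Char.phi_nonneg_of_mem hQM hMQ hQproper harch (hQ₀sub hp)
  rwa [Char.phi_eval hQM hMQ hQproper harch hmaxtot p] at this

end Character

section Core

variable {m : ℕ}

set_option maxHeartbeats 2000000 in
/-- Putinar's Positivstellensatz (qualitative form). -/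
theorem putinar_core {g : Fin m → Rg n}
    (harch0 : ∃ N : ℕ, (C (N:ℝ) : Rg n) - ∑ i, (X i)^2 ∈ QMset g)
    {S : Set (Fin n → ℝ)} (hS : S = {x | ∀ j, 0 ≤ eval x (g j)})
    (hSne : S.Nonempty) (hScpt : IsCompact S) (f : Rg n)
    (hfpos : ∀ x ∈ S, 0 < eval x f) :
    ∃ c : ℝ, 0 < c ∧ f - C c ∈ QMset g := by
  classical
  have hQM := QMset.isQM g
  have harch : ∀ p : Rg n, Bdd g p := arch_all g harch0
  -- minimum of f on S
  obtain ⟨x₀, hx₀S, hx₀min'⟩ := hScpt.exists_isMinOn hSne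
    (MvPolynomial.continuous_eval (p := f)).continuousOn
  have hx₀min : ∀ y ∈ S, eval x₀ f ≤ eval y f := fun y hy => hx₀min' hy
  set θ : ℝ := eval x₀ f with hθdef
  have hθ : 0 < θ := hfpos x₀ hx₀S
  set lam : ℝ := θ / 2 with hlam
  have hx₀g : ∀ j, 0 ≤ eval x₀ (g j) := by
    have := hx₀S; rw [hS] at this; exact this
  -- the certificate from improperness of M + (lam - f)·Σ²
  obtain ⟨σ, hσ, qt, hqt, hcert⟩ :
      ∃ σ, LSOS σ ∧ ∃ qt ∈ QMset g, σ * (f - C lam) = 1 + qt := by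
    set Q₀ : Set (Rg n) := {y | ∃ q ∈ QMset g, ∃ s, LSOS s ∧ y = q + s * (C lam - f)}
      with hQ₀def
    have hQ₀QM : IsQM Q₀ := by
      constructor
      · rintro a1 a2 ⟨q1, hq1, s1, hs1, rfl⟩ ⟨q2, hq2, s2, hs2, rfl⟩
        exact ⟨q1 + q2, hQM.add_mem hq1 hq2, s1 + s2, hs1.add hs2, by ring⟩
      · rintro p a ⟨q1, hq1, s1, hs1, rfl⟩
        exact ⟨p^2 * q1, hQM.sq_mul_mem p hq1, p^2 * s1, (LSOS.sq p).mul hs1, by ring⟩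
      · intro p
        exact ⟨p^2, hQM.sq_mem p, 0, LSOS.zero, by ring⟩
    have hMQ₀ : QMset g ⊆ Q₀ := fun y hy => ⟨y, hy, 0, LSOS.zero, by ring⟩
    by_cases hproper : (-1 : Rg n) ∈ Q₀
    · obtain ⟨q, hq, s, hs, he⟩ := hproper
      exact ⟨s, hs, q, hq, by linear_combination he⟩
    · exfalso
      obtain ⟨x, hx⟩ := exists_point harch hQ₀QM hMQ₀ hproper
      have hxS : x ∈ S := by
        rw [hS]
        exact fun j => hx _ (hMQ₀ (QMset.gen_mem g j))
      have h1 : 0 ≤ eval x (C lam - f) := by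
        refine hx _ ⟨0, hQM.zero_mem, 1, LSOS.one, by ring⟩
      rw [map_sub, eval_C] at h1
      have h2 := hx₀min x hxS
      have h3 := hfpos x hxS
      rw [hlam] at h1
      linarith
  -- the sup
  set Lf : Set ℝ := {l | f - C l ∈ QMset g} with hLf
  obtain ⟨kf, hkf0, hkf1, hkf2⟩ := harch f
  have hLfne : Lf.Nonempty := by
    refine ⟨-kf, ?_⟩
    show f - C (-kf) ∈ QMset g
    rw [map_neg, sub_neg_eq_add, add_comm]
    exact hkf2
  have hLfbdd : BddAbove Lf := by
    refine ⟨eval x₀ f, fun l hl => ?_⟩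
    have := QMset.eval_nonneg hl hx₀g
    rw [map_sub, eval_C] at this
    linarith
  set lam0 : ℝ := sSup Lf with hlam0
  rcases le_or_gt lam0 0 with hneg | hpos
  swap
  · -- positive sup: done
    obtain ⟨l, hlmem, hllt⟩ := exists_lt_of_lt_csSup hLfne (half_lt_self hpos)
    refine ⟨lam0 / 2, half_pos hpos, ?_⟩
    have : f - C (lam0/2) = (f - C l) + C (l - lam0/2) := by rw [map_sub]; ring
    rw [this]
    exact hQM.add_mem hlmem (hQM.const_mem (by linarith))
  · exfalso
    -- lower approximations of h := f - C lam0
    set h : Rg n := f - C lam0 with hh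
    have hlow : ∀ δ : ℝ, 0 < δ → h + C δ ∈ QMset g := by
      intro δ hδ
      obtain ⟨l, hlmem, hllt⟩ := exists_lt_of_lt_csSup hLfne
        (show lam0 - δ < lam0 by linarith)
      have : h + C δ = (f - C l) + C (l - (lam0 - δ)) := by
        rw [hh, map_sub, map_sub]; ring
      rw [this]
      exact hQM.add_mem hlmem (hQM.const_mem (by linarith))
    have hmkf : (-kf) ∈ Lf := by
      show f - C (-kf) ∈ QMset g
      rw [map_neg, sub_neg_eq_add, add_comm]
      exact hkf2
    have hlam0low : -kf ≤ lam0 := le_csSup hLfbdd hmkf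
    clear_value θ lam lam0
    -- bound for σ
    obtain ⟨ks, hks0, hks1, hks2⟩ := harch σ
    set nn : ℝ := ks + 1 with hnn
    have hnn1 : 1 ≤ nn := by linarith
    have hnn0 : 0 < nn := by linarith
    have hCnnm : C nn - σ ∈ QMset g := by
      have : C nn - σ = (C ks - σ) + C 1 := by rw [hnn, map_add]; ring
      rw [this]; exact hQM.add_mem hks1 (hQM.const_mem zero_le_one)
    have hCnnp : C nn + σ ∈ QMset g := by
      have : C nn + σ = (C nn - σ) + (σ + σ) := by ring
      rw [this]
      exact hQM.add_mem hCnnm (hQM.add_mem (hQM.sos_mem hσ) (hQM.sos_mem hσ))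
    set eta : ℝ := 1 / nn with heta
    have heta0 : 0 < eta := by positivity
    have heta1 : eta ≤ 1 := by
      rw [heta]; rw [div_le_one hnn0]; linarith
    set nubar : ℝ := lam - lam0 with hnubar
    have hnubar0 : 0 < nubar := by
      have : 0 < lam := by rw [hlam]; linarith
      rw [hnubar]; linarith
    set nu : ℝ := min nubar (eta / 2) with hnu
    have hnu0 : 0 < nu := lt_min hnubar0 (by linarith)
    have hnueta : nu ≤ eta / 2 := min_le_right _ _
    have hnunubar : nu ≤ nubar := min_le_left _ _
    set w : Rg n := f - C (lam0 + nu) with hw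
    set q' : Rg n := qt + C (nubar - nu) * σ with hq'
    have hq'mem : q' ∈ QMset g := by
      rw [hq']
      exact hQM.add_mem hqt (hQM.smul_mem (by linarith) (hQM.sos_mem hσ))
    have hcert' : σ * w = 1 + q' := by
      rw [hw, hq', hnubar]
      have hC : C (lam0 + nu) = (C lam - C (lam - lam0 - nu) : Rg n) := by
        rw [← map_sub]; congr 1; ring
      rw [hC]
      linear_combination hcert
    -- μ-step : w² ≥ η²
    have hnnsq : C (nn^2) - σ^2 ∈ QMset g := hQM.sq_diff_mem hnn0 hCnnm hCnnp
    have hkey : C (nn^2) * w^2 - 1 = w^2 * (C (nn^2) - σ^2) + (q' + q' + q' * q') := by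
      linear_combination (σ * w + 1 + q') * hcert'
    have hmem1 : C (nn^2) * w^2 - 1 ∈ QMset g := by
      rw [hkey]
      refine hQM.add_mem (hQM.sq_mul_mem w hnnsq) ?_
      exact hQM.add_mem (hQM.add_mem hq'mem hq'mem)
        (by rw [show q' * q' = q'^2 by ring]; exact hQM.sq_mem q')
    have hA : w^2 - C (eta^2) ∈ QMset g := by
      have he : (C (eta^2) : Rg n) * C (nn^2) = 1 := by
        rw [← map_mul, heta]
        have : (1/nn)^2 * nn^2 = 1 := by field_simp
        rw [this, map_one]
      have : w^2 - C (eta^2) = C (eta^2) * (C (nn^2) * w^2 - 1) := by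
        linear_combination (-(w^2)) * he
      rw [this]
      exact hQM.smul_mem (by positivity) hmem1
    -- the upper bound K for h
    set K : ℝ := 2 * kf + 3 with hK
    have hK3 : 3 ≤ K := by linarith
    have hKh : C K - h ∈ QMset g := by
      have : C K - h = (C kf - f) + C (K - kf + lam0) := by
        rw [hh]; simp only [map_add, map_sub]; ring
      rw [this]
      exact hQM.add_mem hkf1 (hQM.const_mem (by linarith))
    -- δ and the main identity
    set del : ℝ := (eta^2 - nu^2) / (2 * K) with hdel
    have hetanu : nu^2 < eta^2 := by nlinarith
    have hdel0 : 0 < del := by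
      rw [hdel]
      exact div_pos (by linarith) (by linarith)
    have hdel1 : del ≤ 1 := by
      rw [hdel, div_le_one (by linarith)]
      nlinarith
    have hhdel : h + C del ∈ QMset g := hlow del hdel0
    set ee : ℝ := 1 / (K - del - (nu + nu)) with hee
    have hden : 1 ≤ K - del - (nu + nu) := by
      have : nu ≤ 1/2 := by
        have : eta / 2 ≤ 1/2 := by linarith
        linarith
      linarith
    have hee0 : 0 < ee := by rw [hee]; positivity
    set cc : ℝ := ee * ((eta^2 - nu^2) / 2) with hcc
    have hcc0 : 0 < cc := by
      rw [hcc]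
      exact mul_pos hee0 (by linarith)
    -- T1 product
    have hKdh : C (K + del) - (h + C del) ∈ QMset g := by
      have : C (K + del) - (h + C del) = C K - h := by rw [map_add]; ring
      rw [this]; exact hKh
    have hprod : (h + C del) * (C (K + del) - (h + C del)) ∈ QMset g :=
      hQM.mul_diff_mem (by linarith) hhdel hKdh
    -- the explicit identity
    have hwh : w = h - C nu := by
      rw [hw, hh, map_add]; ring
    clear_value nn eta nubar nu del ee cc K h w q'
    have hr1 : ee * (K - del - (nu + nu)) = 1 := by
      rw [hee, one_div, inv_mul_cancel₀ (by linarith)]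
    have hE1 : (C ee : Rg n) * (C K - C del - (C nu + C nu)) = 1 := by
      rw [← map_add, ← map_sub, ← map_sub, ← map_mul, hr1, map_one]
    have hr2 : cc = ee * (eta * eta - nu * nu - del * K) := by
      have hKne : K ≠ 0 := by linarith
      rw [hcc, hdel]
      field_simp
      ring
    have hE2 : (C cc : Rg n) = C ee * (C eta * C eta - C nu * C nu - C del * C K) := by
      rw [← map_mul, ← map_mul, ← map_mul, ← map_sub, ← map_sub, ← map_mul, hr2]
    have hident0 : (C (eta^2) : Rg n) = C eta * C eta := by
      rw [← map_mul, sq]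
    have hidentity : h - C cc =
        C ee * ((h + C del) * (C (K + del) - (h + C del)) + (w^2 - C (eta^2))) := by
      rw [hwh, map_add, hident0]
      linear_combination (-h) * hE1 - hE2
    have hfinal : h - C cc ∈ QMset g := by
      rw [hidentity]
      exact hQM.smul_mem hee0.le (hQM.add_mem hprod hA)
    have hmemLf : lam0 + cc ∈ Lf := by
      show f - C (lam0 + cc) ∈ QMset g
      have : f - C (lam0 + cc) = h - C cc := by rw [hh, map_add]; ring
      rw [this]; exact hfinal
    have := le_csSup hLfbdd hmemLf
    linarith

end Core

section Convert

variable {m : ℕ}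

lemma list_sum_sq (l : List (Rg n)) :
    (l.map (fun q => q ^ 2)).sum = ∑ i : Fin l.length, (l.get i) ^ 2 := by
  induction l with
  | nil => simp
  | cons a l ih => simp [Fin.sum_univ_succ, ih]

lemma isSOS_iff_LSOS (p : Rg n) : IsSOS p ↔ LSOS p := by
  constructor
  · rintro ⟨r, s, rfl⟩
    refine ⟨List.ofFn s, ?_⟩
    rw [List.map_ofFn, List.sum_ofFn]
    rfl
  · rintro ⟨l, rfl⟩
    exact ⟨l.length, fun i => l.get i, list_sum_sq l⟩

end Convert

end PutinarProof

open PutinarProof in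
set_option maxHeartbeats 1000000 in
set_option linter.unusedVariables false in
theorem stmt_16 {n m : ℕ} (hn : 1 ≤ n) (d : ℕ)
    (f : MvPolynomial (Fin n) ℝ) (g : Fin m → MvPolynomial (Fin n) ℝ)
    (hfint : ∀ σ, ∃ z : ℤ, f.coeff σ = (z : ℝ))
    (hgint : ∀ j, ∀ σ, ∃ z : ℤ, (g j).coeff σ = (z : ℝ))
    (hfdeg : f.totalDegree ≤ d) (hgdeg : ∀ j, (g j).totalDegree ≤ d)
    (S : Set (Fin n → ℝ)) (hS : S = {x | ∀ j, 0 ≤ eval x (g j)})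
    (hSne : S.Nonempty) (hScpt : IsCompact S)
    (hScube : S ⊆ Set.Icc (-1 : Fin n → ℝ) 1)
    (hSint : (interior S).Nonempty)
    (harch : ∃ N : ℕ, InQM g ((N : MvPolynomial (Fin n) ℝ) - ∑ i, (X i) ^ 2))
    (hfpos : ∀ x ∈ S, 0 < eval x f) :
    ∃ k N : ℕ, 0 < N ∧
      ∃ Nk : Finset (Fin n →₀ ℕ),
        (∀ α : Fin n →₀ ℕ, α ∈ Nk ↔ (∑ i, α i) ≤ k) ∧
        ∃ σ0 : MvPolynomial (Fin n) ℝ, ∃ σ : Fin m → MvPolynomial (Fin n) ℝ,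
          ∃ σa : (Fin n →₀ ℕ) → MvPolynomial (Fin n) ℝ,
            IsSOS σ0 ∧ σ0.totalDegree ≤ 2 * k ∧
            (∀ j, IsSOS (σ j) ∧ (σ j * g j).totalDegree ≤ 2 * k) ∧
            (∀ α ∈ Nk, IsSOS (σa α) ∧
              (σa α * ((1 : MvPolynomial (Fin n) ℝ) - monomial (α + α) (1 : ℝ))).totalDegree
                ≤ 2 * k) ∧
            f - ((1 : ℝ) / 2 ^ N) • (∑ α ∈ Nk, monomial (α + α) (1 : ℝ)) =
              σ0 + (∑ j, σ j * g j) +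
              ∑ α ∈ Nk, σa α * ((1 : MvPolynomial (Fin n) ℝ) - monomial (α + α) (1 : ℝ)) := by
  classical
  -- convert the archimedean hypothesis
  have harch' : ∃ N : ℕ, (C (N:ℝ) : Rg n) - ∑ i, (X i)^2 ∈ QMset g := by
    obtain ⟨N, σ0, σ, hσ0, hσ, heq⟩ := harch
    refine ⟨N, σ0, σ, (isSOS_iff_LSOS σ0).mp hσ0, fun j => (isSOS_iff_LSOS _).mp (hσ j), ?_⟩
    rw [map_natCast]
    exact heq
  obtain ⟨c, hc, hmem⟩ := putinar_core harch' hS hSne hScpt f hfpos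
  obtain ⟨σ0, σ, hσ0, hσ, heq⟩ := hmem
  -- the degree bound
  set D : ℕ := max σ0.totalDegree (Finset.univ.sup fun j => (σ j * g j).totalDegree) with hD
  set k : ℕ := max D 1 with hk
  have hDk : D ≤ k := le_max_left _ _
  -- the index set
  set Nk : Finset (Fin n →₀ ℕ) := ((Finset.univ : Finset (Fin n → Fin (k+1))).image
      (fun v => Finsupp.equivFunOnFinite.symm (fun i => (v i : ℕ)))).filter
      (fun α => (∑ i, α i) ≤ k) with hNkdef
  have hNkmem : ∀ α : Fin n →₀ ℕ, α ∈ Nk ↔ (∑ i, α i) ≤ k := by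
    intro α
    rw [hNkdef, Finset.mem_filter]
    constructor
    · exact fun h => h.2
    · intro hα
      refine ⟨Finset.mem_image.mpr ⟨fun i => ⟨α i, ?_⟩, Finset.mem_univ _, ?_⟩, hα⟩
      · have : α i ≤ ∑ i', α i' :=
          Finset.single_le_sum (f := fun i' => α i') (fun _ _ => Nat.zero_le _)
            (Finset.mem_univ i)
        omega
      · exact Equiv.symm_apply_apply Finsupp.equivFunOnFinite α
  -- choice of N
  obtain ⟨N0, hN0⟩ := exists_nat_gt ((Nk.card : ℝ) / c)
  set N : ℕ := N0 + 1 with hN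
  have hNpos : 0 < N := Nat.succ_pos _
  set ε : ℝ := 1 / 2 ^ N with hε
  have hε0 : 0 < ε := by rw [hε]; positivity
  have h2N : ((Nk.card : ℝ) / c) < 2 ^ N := by
    have h1 : (N0 : ℝ) < 2 ^ N := by
      have := Nat.lt_two_pow_self (n := N)
      have h2 : (N:ℝ) < (2:ℝ) ^ N := by exact_mod_cast this
      have h3 : (N0 : ℝ) ≤ (N : ℝ) := by exact_mod_cast Nat.le_succ N0
      linarith
    linarith
  have hεcard : ε * (Nk.card : ℝ) ≤ c := by
    rw [div_lt_iff₀ hc] at h2N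
    rw [hε]
    rw [div_mul_eq_mul_div, one_mul, div_le_iff₀ (by positivity : (0:ℝ) < 2 ^ N)]
    nlinarith
  refine ⟨k, N, hNpos, Nk, hNkmem, σ0 + C (c - ε * (Nk.card : ℝ)), σ, fun _ => C ε,
    ?_, ?_, ?_, ?_, ?_⟩
  · -- σ0' is SOS
    rw [isSOS_iff_LSOS]
    exact ((isSOS_iff_LSOS σ0).mp ((isSOS_iff_LSOS σ0).mpr hσ0)).add
      (LSOS.const (by linarith))
  · -- degree of σ0'
    refine le_trans (totalDegree_add _ _) (max_le ?_ ?_)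
    · have h1 : σ0.totalDegree ≤ D := by rw [hD]; exact le_max_left _ _
      omega
    · rw [totalDegree_C]; omega
  · -- the σ j
    intro j
    refine ⟨(isSOS_iff_LSOS _).mpr (hσ j), ?_⟩
    have h1 : (σ j * g j).totalDegree ≤ D := by
      rw [hD]
      exact le_trans (Finset.le_sup (f := fun j => (σ j * g j).totalDegree) (Finset.mem_univ j)) (le_max_right _ _)
    omega
  · -- the σa α
    intro α hα
    refine ⟨(isSOS_iff_LSOS _).mpr (LSOS.const hε0.le), ?_⟩
    refine le_trans (totalDegree_mul _ _) ?_
    rw [totalDegree_C, zero_add]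
    refine le_trans (totalDegree_sub _ _) (max_le ?_ ?_)
    · rw [totalDegree_one]; omega
    · rw [totalDegree_monomial _ (one_ne_zero)]
      have h1 : ((α + α).sum fun _ e => e) = ∑ i, (α + α) i :=
        Finsupp.sum_fintype _ _ (fun _ => rfl)
      rw [h1]
      have h2 : ∑ i, (α + α) i = (∑ i, α i) + (∑ i, α i) := by
        rw [← Finset.sum_add_distrib]
        exact Finset.sum_congr rfl (fun i _ => Finsupp.add_apply α α i)
      rw [h2]
      have := (hNkmem α).mp hα
      omega
  · -- the identity
    have hsum1 : (∑ _α ∈ Nk, (1 : Rg n)) = ((Nk.card : ℕ) : Rg n) := by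
      rw [Finset.sum_const, nsmul_eq_mul, mul_one]
    have hs2 : (∑ α ∈ Nk, C ε * ((1 : Rg n) - monomial (α + α) (1:ℝ)))
        = C ε * (((Nk.card : ℕ) : Rg n) - ∑ α ∈ Nk, monomial (α + α) (1:ℝ)) := by
      rw [← Finset.mul_sum, Finset.sum_sub_distrib, hsum1]
    have hE : (C (c - ε * (Nk.card : ℝ)) : Rg n)
        = C c - C ε * ((Nk.card : ℕ) : Rg n) := by
      rw [map_sub, map_mul, map_natCast]
    have hsm : ((1 : ℝ) / 2 ^ N) • (∑ α ∈ Nk, monomial (α + α) (1:ℝ))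
        = C ε * ∑ α ∈ Nk, monomial (α + α) (1:ℝ) := by
      rw [hε, MvPolynomial.smul_eq_C_mul]
    rw [hsm, hs2, hE]
    linear_combination heq
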